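/- Let ω_j = |j|^{2s} (ω_0=1), γ_j = |j|^{2p} (γ_0=1), α_j = |j|^{-2a} (α_0=1) with p > s ≥ 0, a ≥ 0. Then Φ_m = max_{k≥1} { (ω_k/γ_k) · min(1, 1/(m α_k)) } satisfies c·m^{-((p-s)∧a)/a} ≤ Φ_m ≤ C·m^{-((p-s)∧a)/a} for constants 0 < c ≤ C and all m ≥ 1 (when a > 0). -/

import Mathlib

open Real

/-- Rate in `m` for the (pol)-(pol) scenario: `Φ_m ≍ m^{-((p-s)∧a)/a}`. -/
theorem rate_phi_pol_pol
    (s p a : ℝ) (hs : 0 ≤ s) (hps : s < p) (ha : 0 < a)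
    (ω γ α : ℤ → ℝ)
    (hω : ∀ j : ℤ, ω j = if j = 0 then 1 else |(j : ℝ)| ^ (2 * s))
    (hγ : ∀ j : ℤ, γ j = if j = 0 then 1 else |(j : ℝ)| ^ (2 * p))
    (hα : ∀ j : ℤ, α j = if j = 0 then 1 else |(j : ℝ)| ^ (-(2 * a)))
    (Φ : ℕ → ℝ)
    (hΦ : ∀ m : ℕ, Φ m = ⨆ k : ℕ+, ω k / γ k * min 1 (1 / (m * α k))) :
    ∃ c C : ℝ, 0 < c ∧ c ≤ C ∧ ∀ m : ℕ, 1 ≤ m →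
      c * (m : ℝ) ^ (-(min (p - s) a / a)) ≤ Φ m ∧
        Φ m ≤ C * (m : ℝ) ^ (-(min (p - s) a / a)) := by
  set r := min (p - s) a with hrdef
  have hr0 : 0 < r := lt_min (by linarith) ha
  have hra : r ≤ a := min_le_right _ _
  have hrps : r ≤ p - s := min_le_left _ _
  set θ := r / a with hθdef
  have hθ0 : 0 < θ := div_pos hr0 ha
  have hθ1 : θ ≤ 1 := (div_le_one ha).2 hra
  have haθ : a * θ = r := by rw [hθdef, mul_comm]; exact div_mul_cancel₀ r ha.ne'
  have hc1 : (2:ℝ) ^ (2*s - 2*p) ≤ 1 :=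
    Real.rpow_le_one_of_one_le_of_nonpos (by norm_num) (by linarith)
  refine ⟨(2:ℝ) ^ (2*s - 2*p), 1, rpow_pos_of_pos (by norm_num) _, hc1, ?_⟩
  intro m hm
  have hM1 : (1:ℝ) ≤ (m:ℝ) := by exact_mod_cast hm
  have hM0 : (0:ℝ) < m := by linarith
  -- simplify the general term
  have hterm : ∀ k : ℕ+, ω k / γ k * min 1 (1 / (m * α k))
      = ((k:ℕ):ℝ) ^ (2*s - 2*p) * min 1 (((k:ℕ):ℝ) ^ (2*a) / m) := by
    intro k
    have hx1 : (1:ℝ) ≤ ((k:ℕ):ℝ) := by exact_mod_cast k.one_le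
    have hx0 : (0:ℝ) < ((k:ℕ):ℝ) := by linarith
    have hk0 : ((k:ℕ):ℤ) ≠ 0 := by exact_mod_cast k.ne_zero
    have habs : |(((k:ℕ):ℤ) : ℝ)| = ((k:ℕ):ℝ) := by
      push_cast; exact abs_of_pos hx0
    rw [hω, hγ, hα, if_neg hk0, if_neg hk0, if_neg hk0, habs,
      ← Real.rpow_sub hx0, Real.rpow_neg hx0.le]
    congr 1
    rw [one_div, mul_inv, inv_inv, mul_comm, ← div_eq_mul_inv]
  -- each term is bounded by m^(-θ)
  have hub : ∀ k : ℕ+, ((k:ℕ):ℝ) ^ (2*s - 2*p) * min 1 (((k:ℕ):ℝ) ^ (2*a) / m)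
      ≤ (m:ℝ) ^ (-θ) := by
    intro k
    have hx1 : (1:ℝ) ≤ ((k:ℕ):ℝ) := by exact_mod_cast k.one_le
    have hx0 : (0:ℝ) < ((k:ℕ):ℝ) := by linarith
    set x : ℝ := ((k:ℕ):ℝ)
    have ht0 : 0 < x ^ (2*a) / m := div_pos (rpow_pos_of_pos hx0 _) hM0
    have hmin : min 1 (x ^ (2*a) / m) ≤ (x ^ (2*a) / m) ^ θ := by
      rcases le_or_gt (x ^ (2*a) / m) 1 with h | h
      · rw [min_eq_right h]
        calc x ^ (2*a) / m = (x ^ (2*a) / m) ^ (1:ℝ) := (Real.rpow_one _).symm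
          _ ≤ (x ^ (2*a) / m) ^ θ := Real.rpow_le_rpow_of_exponent_ge ht0 h hθ1
      · rw [min_eq_left h.le]
        calc (1:ℝ) = (x ^ (2*a) / m) ^ (0:ℝ) := (Real.rpow_zero _).symm
          _ ≤ (x ^ (2*a) / m) ^ θ := Real.rpow_le_rpow_of_exponent_le h.le hθ0.le
    calc x ^ (2*s - 2*p) * min 1 (x ^ (2*a) / m)
        ≤ x ^ (2*s - 2*p) * (x ^ (2*a) / m) ^ θ :=
          mul_le_mul_of_nonneg_left hmin (Real.rpow_nonneg hx0.le _)
      _ = x ^ (2*s - 2*p + 2*a*θ) / (m:ℝ) ^ θ := by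
          rw [Real.div_rpow (Real.rpow_nonneg hx0.le _) hM0.le, ← Real.rpow_mul hx0.le,
            mul_div_assoc', ← Real.rpow_add hx0]
      _ ≤ 1 / (m:ℝ) ^ θ := by
          gcongr
          exact Real.rpow_le_one_of_one_le_of_nonpos hx1 (by nlinarith)
      _ = (m:ℝ) ^ (-θ) := by rw [Real.rpow_neg hM0.le, one_div]
  have hbdd : BddAbove (Set.range fun k : ℕ+ => ω k / γ k * min 1 (1 / (m * α k))) := by
    refine ⟨(m:ℝ) ^ (-θ), ?_⟩
    rintro _ ⟨k, rfl⟩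
    dsimp only
    rw [hterm k]; exact hub k
  constructor
  · -- lower bound
    rcases le_total (p - s) a with hc | hc
    · -- r = p - s : pick k ≈ m^(1/(2a))
      set y : ℝ := (m:ℝ) ^ (1/(2*a)) with hydef
      have hy1 : (1:ℝ) ≤ y := Real.one_le_rpow hM1 (by positivity)
      have hy0 : (0:ℝ) < y := by linarith
      set n : ℕ := ⌈y⌉₊ with hndef
      have hn0 : 0 < n := Nat.ceil_pos.2 hy0
      set k₀ : ℕ+ := ⟨n, hn0⟩ with hk₀
      have hxval : ((k₀:ℕ):ℝ) = (n:ℝ) := rfl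
      have hyx : y ≤ (n:ℝ) := Nat.le_ceil y
      have hx2y : (n:ℝ) ≤ 2*y := by
        have := Nat.ceil_lt_add_one hy0.le
        rw [← hndef] at this; linarith
      have hy2a : y ^ (2*a) = (m:ℝ) := by
        rw [hydef, ← Real.rpow_mul hM0.le]
        rw [show 1/(2*a)*(2*a) = (1:ℝ) by field_simp, Real.rpow_one]
      have hxM : (m:ℝ) ≤ (n:ℝ) ^ (2*a) := by
        rw [← hy2a]; exact Real.rpow_le_rpow hy0.le hyx (by positivity)
      have hminone : min 1 (((n:ℝ)) ^ (2*a) / m) = 1 :=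
        min_eq_left ((one_le_div hM0).2 hxM)
      have hexp : 1/(2*a)*(2*s-2*p) = -θ := by
        rw [hθdef, hrdef, min_eq_left hc]; field_simp; ring
      have hterm_val : ω k₀ / γ k₀ * min 1 (1 / (m * α k₀)) = (n:ℝ) ^ (2*s - 2*p) := by
        rw [hterm k₀, hxval, hminone, mul_one]
      have hlow : (2:ℝ) ^ (2*s - 2*p) * (m:ℝ) ^ (-θ) ≤ (n:ℝ) ^ (2*s - 2*p) := by
        have h1 : (2*y) ^ (2*s-2*p) ≤ (n:ℝ) ^ (2*s-2*p) := by
          have hn0' : (0:ℝ) < (n:ℝ) := by exact_mod_cast hn0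
          exact Real.rpow_le_rpow_of_nonpos hn0' hx2y (by linarith)
        have h2 : (2*y) ^ (2*s-2*p) = (2:ℝ) ^ (2*s-2*p) * (m:ℝ) ^ (-θ) := by
          rw [Real.mul_rpow (by norm_num) hy0.le, hydef, ← Real.rpow_mul hM0.le, hexp]
        linarith [h2 ▸ h1]
      calc (2:ℝ) ^ (2*s - 2*p) * (m:ℝ) ^ (-θ) ≤ (n:ℝ) ^ (2*s - 2*p) := hlow
        _ = ω k₀ / γ k₀ * min 1 (1 / (m * α k₀)) := hterm_val.symm
        _ ≤ Φ m := by rw [hΦ]; exact le_ciSup hbdd k₀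
    · -- r = a : pick k = 1
      have hθeq : θ = 1 := by rw [hθdef, hrdef, min_eq_right hc]; field_simp
      have hterm1 : ω (1:ℕ+) / γ (1:ℕ+) * min 1 (1 / (m * α (1:ℕ+))) = 1 / (m:ℝ) := by
        rw [hterm 1]
        have : (((1:ℕ+):ℕ):ℝ) = (1:ℝ) := by norm_num
        rw [this, Real.one_rpow, Real.one_rpow, one_mul, min_eq_right]
        exact (div_le_one hM0).2 hM1
      have : (m:ℝ) ^ (-θ) = 1 / (m:ℝ) := by
        rw [hθeq, Real.rpow_neg_one, one_div]
      calc (2:ℝ) ^ (2*s - 2*p) * (m:ℝ) ^ (-θ) ≤ 1 * (m:ℝ) ^ (-θ) :=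
            mul_le_mul_of_nonneg_right hc1 (Real.rpow_nonneg hM0.le _)
        _ = 1 / (m:ℝ) := by rw [one_mul, this]
        _ = ω (1:ℕ+) / γ (1:ℕ+) * min 1 (1 / (m * α (1:ℕ+))) := hterm1.symm
        _ ≤ Φ m := by rw [hΦ]; exact le_ciSup hbdd 1
  · -- upper bound
    rw [hΦ, one_mul]
    refine ciSup_le fun k => ?_
    rw [hterm k]; exact hub k
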